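/- For integers n ≥ 2 and t ≥ i ≥ 1, one has ((n-1)/(n+t-1)) · ((t-i)/(n+t-i))^i · C(n+t-1, t) ≤ C(n+t-i-2, t-i) ≤ (t/n)^i · C(n+t-1, t). -/

import Mathlib

/-- Choose recurrence: `a * C(a-1, b-1) = C(a, b) * b` in the form we need. -/
private lemma choose_rec (m k : ℕ) :
    (m + 1) * m.choose k = (m + 1).choose (k + 1) * (k + 1) :=
  Nat.add_one_mul_choose_eq m k

/-- Upper bound, nat form: `n^i * C(n+t-1-i, t-i) ≤ t^i * C(n+t-1, t)`. -/
private lemma keyU (n t : ℕ) (hn : 2 ≤ n) :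
    ∀ i, i ≤ t → n ^ i * ((n + t - 1 - i).choose (t - i))
      ≤ t ^ i * ((n + t - 1).choose t) := by
  intro i
  induction i with
  | zero => simp
  | succ i ih =>
    intro h
    have IH := ih (by omega)
    have key : (n + t - 1 - i) * ((n + t - 1 - (i + 1)).choose (t - (i + 1)))
        = ((n + t - 1 - i).choose (t - i)) * (t - i) := by
      have h0 := choose_rec (n + t - 1 - (i + 1)) (t - (i + 1))
      have e1 : n + t - 1 - (i + 1) + 1 = n + t - 1 - i := by omega
      have e2 : t - (i + 1) + 1 = t - i := by omega
      rw [e1, e2] at h0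
      exact h0
    -- n * (t - i) ≤ t * (n + t - 1 - i)
    have hkn : n * (t - i) ≤ t * (n + t - 1 - i) := by
      have h1 : t - i ≤ t := Nat.sub_le _ _
      have h2 : n ≤ n + t - 1 - i := by omega
      calc n * (t - i) ≤ (n + t - 1 - i) * t := Nat.mul_le_mul h2 h1
        _ = t * (n + t - 1 - i) := Nat.mul_comm _ _
    have hpos : 0 < n + t - 1 - i := by omega
    have main : n ^ (i + 1) * ((n + t - 1 - (i + 1)).choose (t - (i + 1))) * (n + t - 1 - i)
        ≤ t ^ (i + 1) * ((n + t - 1).choose t) * (n + t - 1 - i) := by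
      calc n ^ (i + 1) * ((n + t - 1 - (i + 1)).choose (t - (i + 1))) * (n + t - 1 - i)
          = n ^ i * n * ((n + t - 1 - i) * ((n + t - 1 - (i + 1)).choose (t - (i + 1)))) := by
            ring
        _ = n ^ i * n * (((n + t - 1 - i).choose (t - i)) * (t - i)) := by rw [key]
        _ = (n ^ i * ((n + t - 1 - i).choose (t - i))) * (n * (t - i)) := by ring
        _ ≤ (t ^ i * ((n + t - 1).choose t)) * (t * (n + t - 1 - i)) :=
            Nat.mul_le_mul IH hkn
        _ = t ^ (i + 1) * ((n + t - 1).choose t) * (n + t - 1 - i) := by ring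
    exact Nat.le_of_mul_le_mul_right main hpos

/-- Lower bound, nat form. -/
private lemma keyL (n t : ℕ) (hn : 2 ≤ n) :
    ∀ i, i ≤ t → (n - 1) * (t - i) ^ i * ((n + t - 1).choose t)
      ≤ (n + t - 1) * (n + t - i) ^ i * ((n + t - 2 - i).choose (t - i)) := by
  intro i
  induction i with
  | zero =>
    intro _
    have h0 := Nat.choose_mul_succ_eq (n + t - 2) t
    have e1 : n + t - 2 + 1 = n + t - 1 := by omega
    rw [e1] at h0
    have e2 : n + t - 1 - t = n - 1 := by omega
    rw [e2] at h0
    simp only [pow_zero, mul_one, Nat.sub_zero]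
    calc (n - 1) * ((n + t - 1).choose t)
        = (n + t - 1).choose t * (n - 1) := by ring
      _ = (n + t - 2).choose t * (n + t - 1) := h0.symm
      _ = (n + t - 1) * ((n + t - 2).choose t) := by ring
      _ ≤ (n + t - 1) * ((n + t - 2).choose t) := le_refl _
  | succ i ih =>
    intro h
    have IH := ih (by omega)
    -- abbreviations via omega-normalized indices
    have key : (n + t - 2 - i) * ((n + t - 2 - (i + 1)).choose (t - (i + 1)))
        = ((n + t - 2 - i).choose (t - i)) * (t - i) := by
      have h0 := choose_rec (n + t - 2 - (i + 1)) (t - (i + 1))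
      have e1 : n + t - 2 - (i + 1) + 1 = n + t - 2 - i := by omega
      have e2 : t - (i + 1) + 1 = t - i := by omega
      rw [e1, e2] at h0
      exact h0
    have hA : 1 ≤ t - i := by omega
    -- (t-(i+1))*(n+t-i) ≤ (t-i)*(n+t-(i+1))
    have f1 : (t - (i + 1)) * (n + t - i) ≤ (t - i) * (n + t - (i + 1)) := by
      have e1 : t - (i + 1) + 1 = t - i := by omega
      have e2 : n + t - (i + 1) + 1 = n + t - i := by omega
      have h1 : t - (i + 1) ≤ n + t - (i + 1) := by omega
      rw [← e1, ← e2]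
      nlinarith [h1]
    have f1p : (t - (i + 1)) ^ i * (n + t - i) ^ i
        ≤ (t - i) ^ i * (n + t - (i + 1)) ^ i := by
      calc (t - (i + 1)) ^ i * (n + t - i) ^ i
          = ((t - (i + 1)) * (n + t - i)) ^ i := (mul_pow _ _ _).symm
        _ ≤ ((t - i) * (n + t - (i + 1))) ^ i := Nat.pow_le_pow_left f1 i
        _ = (t - i) ^ i * (n + t - (i + 1)) ^ i := mul_pow _ _ _
    have f2 : (t - (i + 1)) * (n + t - 2 - i) ≤ (t - i) * (n + t - (i + 1)) := by
      have h1 : t - (i + 1) ≤ t - i := by omega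
      have h2 : n + t - 2 - i ≤ n + t - (i + 1) := by omega
      exact Nat.mul_le_mul h1 h2
    have hKpos : 0 < (n + t - i) ^ i * (n + t - 2 - i) := by
      have : 0 < n + t - i := by omega
      have : 0 < (n + t - i) ^ i := Nat.pow_pos ‹_›
      have : 0 < n + t - 2 - i := by omega
      positivity
    have main :
        (n - 1) * (t - (i + 1)) ^ (i + 1) * ((n + t - 1).choose t)
          * ((n + t - i) ^ i * (n + t - 2 - i))
        ≤ (n + t - 1) * (n + t - (i + 1)) ^ (i + 1)
          * ((n + t - 2 - (i + 1)).choose (t - (i + 1)))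
          * ((n + t - i) ^ i * (n + t - 2 - i)) := by
      calc (n - 1) * (t - (i + 1)) ^ (i + 1) * ((n + t - 1).choose t)
            * ((n + t - i) ^ i * (n + t - 2 - i))
          = (n - 1) * ((n + t - 1).choose t)
            * ((t - (i + 1)) ^ i * (n + t - i) ^ i)
            * ((t - (i + 1)) * (n + t - 2 - i)) := by ring
        _ ≤ (n - 1) * ((n + t - 1).choose t)
            * ((t - i) ^ i * (n + t - (i + 1)) ^ i)
            * ((t - i) * (n + t - (i + 1))) := by
            exact Nat.mul_le_mul (Nat.mul_le_mul (le_refl _) f1p) f2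
        _ = ((n - 1) * (t - i) ^ i * ((n + t - 1).choose t))
            * ((n + t - (i + 1)) ^ (i + 1) * (t - i)) := by ring
        _ ≤ ((n + t - 1) * (n + t - i) ^ i * ((n + t - 2 - i).choose (t - i)))
            * ((n + t - (i + 1)) ^ (i + 1) * (t - i)) :=
            Nat.mul_le_mul IH (le_refl _)
        _ = (n + t - 1) * (n + t - (i + 1)) ^ (i + 1) * (n + t - i) ^ i
            * (((n + t - 2 - i).choose (t - i)) * (t - i)) := by ring
        _ = (n + t - 1) * (n + t - (i + 1)) ^ (i + 1) * (n + t - i) ^ i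
            * ((n + t - 2 - i) * ((n + t - 2 - (i + 1)).choose (t - (i + 1)))) := by
            rw [key]
        _ = (n + t - 1) * (n + t - (i + 1)) ^ (i + 1)
            * ((n + t - 2 - (i + 1)).choose (t - (i + 1)))
            * ((n + t - i) ^ i * (n + t - 2 - i)) := by ring
    exact Nat.le_of_mul_le_mul_right main hKpos

/-- For integers `n ≥ 2` and `t ≥ i ≥ 1`,
`((n-1)/(n+t-1)) · ((t-i)/(n+t-i))^i · C(n+t-1, t) ≤ C(n+t-i-2, t-i) ≤ (t/n)^i · C(n+t-1, t)`
over the rationals. -/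
theorem stmt1 (n t i : ℕ) (hn : 2 ≤ n) (hi : 1 ≤ i) (hit : i ≤ t) :
    ((((n - 1 : ℕ) : ℚ) / ((n + t - 1 : ℕ) : ℚ))
        * (((t - i : ℕ) : ℚ) / ((n + t - i : ℕ) : ℚ)) ^ i * ((n + t - 1).choose t : ℚ)
      ≤ ((n + t - i - 2).choose (t - i) : ℚ))
    ∧ (((n + t - i - 2).choose (t - i) : ℚ)
      ≤ ((t : ℚ) / (n : ℚ)) ^ i * ((n + t - 1).choose t : ℚ)) := by
  have e0 : n + t - i - 2 = n + t - 2 - i := by omega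
  constructor
  · -- lower bound
    have hL := keyL n t hn i hit
    rw [← e0] at hL
    have hLQ : ((n - 1 : ℕ) : ℚ) * ((t - i : ℕ) : ℚ) ^ i * ((n + t - 1).choose t : ℚ)
        ≤ ((n + t - 1 : ℕ) : ℚ) * ((n + t - i : ℕ) : ℚ) ^ i
          * ((n + t - i - 2).choose (t - i) : ℚ) := by exact_mod_cast hL
    have hp1 : (0 : ℚ) < ((n + t - 1 : ℕ) : ℚ) := by
      have : 0 < n + t - 1 := by omega
      exact_mod_cast this
    have hp2 : (0 : ℚ) < ((n + t - i : ℕ) : ℚ) ^ i := by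
      have : 0 < n + t - i := by omega
      have : (0 : ℚ) < ((n + t - i : ℕ) : ℚ) := by exact_mod_cast this
      positivity
    rw [div_pow, div_mul_div_comm, div_mul_eq_mul_div, div_le_iff₀ (by positivity)]
    nlinarith [hLQ]
  · -- upper bound
    have hU := keyU n t hn i hit
    have hmono : (n + t - i - 2).choose (t - i) ≤ (n + t - 1 - i).choose (t - i) :=
      Nat.choose_le_choose _ (by omega)
    have hnat : n ^ i * ((n + t - i - 2).choose (t - i)) ≤ t ^ i * ((n + t - 1).choose t) :=
      le_trans (Nat.mul_le_mul (le_refl _) hmono) hU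
    have hQ : (n : ℚ) ^ i * ((n + t - i - 2).choose (t - i) : ℚ)
        ≤ (t : ℚ) ^ i * ((n + t - 1).choose t : ℚ) := by exact_mod_cast hnat
    have hn0 : (0 : ℚ) < (n : ℚ) := by exact_mod_cast (by omega : 0 < n)
    rw [div_pow, div_mul_eq_mul_div, le_div_iff₀ (by positivity)]
    nlinarith [hQ]
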